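/- arXiv:2002.07066 — 3 statements merged into one kernel-verified Lean document; each statement's English description precedes it below -/
import Mathlib

section
/- For any ε > 0 there exist two pairs of 2×2 payoff matrices u = (u₁,u₂) and u' = (u₁',u₂'), each defining a general-sum game with a unique CCE, such that max_j max_{a,b} |u_j(a,b) − u_j'(a,b)| ≤ 2ε but the unique CCE values satisfy max_{i∈{1,2}} |V_i(u) − V_i(u')| ≥ 1. In particular, the CCE value of a general-sum game is not a Lipschitz function of the payoff matrices. -/
open Finset

/-- `σ` is a probability distribution on `A × A`. -/
def IsJointDist {A : Type*} [Fintype A] (σ : A × A → ℝ) : Prop :=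
  (∀ p, 0 ≤ σ p) ∧ ∑ p : A × A, σ p = 1

/-- `σ` is a coarse correlated equilibrium of the general-sum game `(u₁, u₂)`
(player 1 maximizes `u₁`, player 2 minimizes `u₂`). -/
def IsCCE {A : Type*} [Fintype A] (σ : A × A → ℝ) (u1 u2 : A → A → ℝ) : Prop :=
  (∀ a' : A, ∑ p : A × A, σ p * u1 a' p.2 ≤ ∑ p : A × A, σ p * u1 p.1 p.2) ∧
  (∀ b' : A, ∑ p : A × A, σ p * u2 p.1 p.2 ≤ ∑ p : A × A, σ p * u2 p.1 b')

/-- The CCE value of a general-sum game is not Lipschitz in the payoff matrices: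
there exist `2×2` games `(u₁,u₂)` and `(u₁',u₂')`, each with a unique CCE,
whose payoffs are `2ε`-close in sup norm but whose unique CCE values differ by
at least `1` for some player. -/
theorem cce_value_not_lipschitz (ε : ℝ) (hε : 0 < ε) :
    ∃ (u1 u2 u1' u2' : Fin 2 → Fin 2 → ℝ) (σ σ' : Fin 2 × Fin 2 → ℝ),
      IsJointDist σ ∧ IsCCE σ u1 u2 ∧
        (∀ τ, IsJointDist τ → IsCCE τ u1 u2 → τ = σ) ∧
      IsJointDist σ' ∧ IsCCE σ' u1' u2' ∧
        (∀ τ, IsJointDist τ → IsCCE τ u1' u2' → τ = σ') ∧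
      (∀ a b, |u1 a b - u1' a b| ≤ 2 * ε ∧ |u2 a b - u2' a b| ≤ 2 * ε) ∧
      1 ≤ max |(∑ p : Fin 2 × Fin 2, σ p * u1 p.1 p.2) - ∑ p : Fin 2 × Fin 2, σ' p * u1' p.1 p.2|
              |(∑ p : Fin 2 × Fin 2, σ p * u2 p.1 p.2) - ∑ p : Fin 2 × Fin 2, σ' p * u2' p.1 p.2| := by
  have habs : ∀ x : ℝ, -(2*ε) ≤ x → x ≤ 2*ε → |x| ≤ 2*ε := fun x h1 h2 => abs_le.2 ⟨h1, h2⟩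
  refine ⟨fun a b => (if a = 0 then ε else 0) + (if b = 0 then 1 else 0),
          fun a b => -(if a = 0 then 1 else 0) - (if b = 0 then ε else 0),
          fun a b => -(if a = 0 then ε else 0) + (if b = 0 then 1 else 0),
          fun a b => -(if a = 0 then 1 else 0) + (if b = 0 then ε else 0),
          fun p => if p = (0, 0) then 1 else 0,
          fun p => if p = (1, 1) then 1 else 0, ?_, ?_, ?_, ?_, ?_, ?_, ?_, ?_⟩
  · refine ⟨fun p => by positivity, ?_⟩
    simp only [Fintype.sum_prod_type, Fin.sum_univ_two]
    norm_num [Prod.ext_iff]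
  · constructor
    · intro a'
      simp only [Fintype.sum_prod_type, Fin.sum_univ_two]
      norm_num [Prod.ext_iff]
      fin_cases a' <;> norm_num <;> linarith
    · intro b'
      simp only [Fintype.sum_prod_type, Fin.sum_univ_two]
      norm_num [Prod.ext_iff]
      fin_cases b' <;> norm_num <;> linarith
  · rintro τ ⟨hpos, hsum⟩ ⟨h1, h2⟩
    have e1 := h1 0
    have e2 := h2 0
    simp only [Fintype.sum_prod_type, Fin.sum_univ_two, Prod.mk_zero_zero,
      Prod.mk_one_one] at e1 e2 hsum
    norm_num at e1 e2 hsum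
    have p01 := hpos (0, 1)
    have p10 := hpos (1, 0)
    have p11 := hpos 1
    have p00 := hpos 0
    have m10 : (0:ℝ) ≤ ε * τ (1, 0) := mul_nonneg hε.le p10
    have m01 : (0:ℝ) ≤ ε * τ (0, 1) := mul_nonneg hε.le p01
    have m11 : (0:ℝ) ≤ ε * τ 1 := mul_nonneg hε.le p11
    have h10 : τ (1, 0) = 0 := by nlinarith
    have h11 : τ 1 = 0 := by nlinarith
    have h01 : τ (0, 1) = 0 := by nlinarith
    have h00 : τ 0 = 1 := by linarith
    funext p
    fin_cases p <;>
      simp_all [Prod.ext_iff, Prod.mk_zero_zero, Prod.mk_one_one]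
  · refine ⟨fun p => by positivity, ?_⟩
    simp only [Fintype.sum_prod_type, Fin.sum_univ_two]
    norm_num [Prod.ext_iff]
  · constructor
    · intro a'
      simp only [Fintype.sum_prod_type, Fin.sum_univ_two]
      norm_num [Prod.ext_iff]
      fin_cases a' <;> norm_num <;> linarith
    · intro b'
      simp only [Fintype.sum_prod_type, Fin.sum_univ_two]
      norm_num [Prod.ext_iff]
      fin_cases b' <;> norm_num <;> linarith
  · rintro τ ⟨hpos, hsum⟩ ⟨h1, h2⟩
    have e1 := h1 1
    have e2 := h2 1
    simp only [Fintype.sum_prod_type, Fin.sum_univ_two, Prod.mk_zero_zero,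
      Prod.mk_one_one] at e1 e2 hsum
    norm_num at e1 e2 hsum
    have p01 := hpos (0, 1)
    have p10 := hpos (1, 0)
    have p11 := hpos 1
    have p00 := hpos 0
    have m10 : (0:ℝ) ≤ ε * τ (1, 0) := mul_nonneg hε.le p10
    have m01 : (0:ℝ) ≤ ε * τ (0, 1) := mul_nonneg hε.le p01
    have m00 : (0:ℝ) ≤ ε * τ 0 := mul_nonneg hε.le p00
    have h00 : τ 0 = 0 := by nlinarith
    have h01 : τ (0, 1) = 0 := by nlinarith
    have h10 : τ (1, 0) = 0 := by nlinarith
    have h11 : τ 1 = 1 := by linarith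
    funext p
    fin_cases p <;>
      simp_all [Prod.ext_iff, Prod.mk_zero_zero, Prod.mk_one_one]
  · intro a b
    constructor <;> apply habs <;> fin_cases a <;> fin_cases b <;> norm_num <;> linarith
  · refine le_max_of_le_left ?_
    have hv : (∑ p : Fin 2 × Fin 2, (if p = ((0:Fin 2), (0:Fin 2)) then (1:ℝ) else 0) *
          ((if p.1 = 0 then ε else 0) + (if p.2 = 0 then 1 else 0))) -
        (∑ p : Fin 2 × Fin 2, (if p = ((1:Fin 2), (1:Fin 2)) then (1:ℝ) else 0) *
          (-(if p.1 = 0 then ε else 0) + (if p.2 = 0 then 1 else 0))) = ε + 1 := by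
      simp only [Fintype.sum_prod_type, Fin.sum_univ_two]
      norm_num [Prod.ext_iff]
    rw [hv, abs_of_nonneg (by linarith)]
    linarith
end

section
/- (Boundedness of least-squares coefficients) Let φ_τ ∈ ℝ^d with ‖φ_τ‖ ≤ 1 for τ = 1,…,k−1, let Λ = I + Σ_{τ=1}^{k-1} φ_τ φ_τ^⊤, and let y_τ ∈ ℝ with |y_τ| ≤ 2H. Then the vector w = Λ^{-1} Σ_{τ=1}^{k-1} φ_τ y_τ satisfies ‖w‖ ≤ 2H√(dk). -/
open Finset Matrix

/-- Boundedness of least-squares coefficients: with `‖φ_τ‖ ≤ 1`, `|y_τ| ≤ 2H`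
(`τ = 1, …, k-1`) and `Λ = I + Σ_τ φ_τ φ_τ^⊤`, the least-squares vector
`w = Λ⁻¹ Σ_τ y_τ φ_τ` satisfies `‖w‖ ≤ 2H√(dk)`. -/
theorem least_squares_coefficients_bounded {d k : ℕ} (H : ℝ) (hH : 0 ≤ H)
    (φ : Fin (k - 1) → Fin d → ℝ) (y : Fin (k - 1) → ℝ)
    (hφ : ∀ τ, Real.sqrt (∑ i, (φ τ i) ^ 2) ≤ 1)
    (hy : ∀ τ, |y τ| ≤ 2 * H)
    (Λ : Matrix (Fin d) (Fin d) ℝ)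
    (hΛ : Λ = (1 : Matrix (Fin d) (Fin d) ℝ) + ∑ τ, vecMulVec (φ τ) (φ τ))
    (w : Fin d → ℝ)
    (hw : w = Λ⁻¹ *ᵥ (∑ τ, y τ • φ τ)) :
    Real.sqrt (∑ i, (w i) ^ 2) ≤ 2 * H * Real.sqrt (d * k) := by
  classical
  set M : Matrix (Fin d) (Fin d) ℝ := ∑ τ, vecMulVec (φ τ) (φ τ) with hM
  -- each rank-one matrix is PSD
  have hrank1 : ∀ τ, (vecMulVec (φ τ) (φ τ)).PosSemidef := by
    intro τ
    refine Matrix.PosSemidef.of_dotProduct_mulVec_nonneg ?_ ?_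
    · ext i j
      simp [vecMulVec_apply, conjTranspose_apply, mul_comm]
    · intro x
      have hmv : vecMulVec (φ τ) (φ τ) *ᵥ x = (φ τ ⬝ᵥ x) • φ τ := by
        ext i
        simp [vecMulVec_apply, mulVec, dotProduct, Finset.mul_sum, mul_comm, mul_left_comm, mul_assoc]
      rw [hmv]
      simp only [star_trivial, dotProduct_smul, smul_eq_mul]
      rw [dotProduct_comm]
      exact mul_self_nonneg _
  have hMps : M.PosSemidef := by
    rw [hM]
    induction (Finset.univ : Finset (Fin (k-1))) using Finset.induction with
    | empty => simpa using (Matrix.PosSemidef.zero : (0 : Matrix (Fin d) (Fin d) ℝ).PosSemidef)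
    | insert a s hnot ih =>
      rw [Finset.sum_insert hnot]
      exact (hrank1 _).add ih
  have hΛpd : Λ.PosDef := by
    rw [hΛ]; exact Matrix.PosDef.add_posSemidef Matrix.PosDef.one hMps
  have hdet : IsUnit Λ.det := hΛpd.det_pos.ne'.isUnit
  have hApd : (Λ⁻¹).PosDef := hΛpd.inv
  set A : Matrix (Fin d) (Fin d) ℝ := Λ⁻¹ with hA
  open scoped MatrixOrder in
  set S : Matrix (Fin d) (Fin d) ℝ := CFC.sqrt A with hSdef
  open scoped MatrixOrder in
  have hSS : S * S = A := CFC.sqrt_mul_sqrt_self A hApd.posSemidef.nonneg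
  have hST : Sᵀ = S := by
    open scoped MatrixOrder in
    have h := (CFC.sqrt_nonneg A).posSemidef.isHermitian
    ext i j
    have := congrFun (congrFun h i) j
    simpa [conjTranspose_apply] using this
  -- key: quadratic form of A via S
  have key : ∀ u v : Fin d → ℝ, u ⬝ᵥ (A *ᵥ v) = (S *ᵥ u) ⬝ᵥ (S *ᵥ v) := by
    intro u v
    rw [← hSS, ← Matrix.mulVec_mulVec, Matrix.dotProduct_mulVec u S, ← hST,
      Matrix.vecMul_transpose, hST]
  set u : Fin d → ℝ := ∑ τ, y τ • φ τ with hu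
  -- Step 1: ‖w‖² ≤ wᵀΛw = uᵀAu
  have hΛw : Λ *ᵥ w = u := by
    rw [hw, Matrix.mulVec_mulVec, Matrix.mul_nonsing_inv _ hdet, Matrix.one_mulVec]
  have step1 : w ⬝ᵥ w ≤ u ⬝ᵥ (A *ᵥ u) := by
    have h1 : w ⬝ᵥ w ≤ w ⬝ᵥ (Λ *ᵥ w) := by
      rw [hΛ, Matrix.add_mulVec, Matrix.one_mulVec, dotProduct_add]
      have : 0 ≤ w ⬝ᵥ (M *ᵥ w) := by simpa using hMps.dotProduct_mulVec_nonneg w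
      linarith
    have h2 : w ⬝ᵥ (Λ *ᵥ w) = u ⬝ᵥ (A *ᵥ u) := by
      rw [hΛw, hw, dotProduct_comm]
    linarith
  -- Euclidean space vectors
  set L : (Fin d → ℝ) ≃ₗ[ℝ] EuclideanSpace ℝ (Fin d) :=
    (WithLp.linearEquiv 2 ℝ (Fin d → ℝ)).symm with hL
  have hLnorm : ∀ x : Fin d → ℝ, ‖L x‖ ^ 2 = x ⬝ᵥ x := by
    intro x
    rw [EuclideanSpace.norm_eq, Real.sq_sqrt (by positivity)]
    simp [hL, dotProduct, sq]
  set g : Fin (k-1) → EuclideanSpace ℝ (Fin d) := fun τ => L (S *ᵥ φ τ) with hg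
  have hSu : L (S *ᵥ u) = ∑ τ, y τ • g τ := by
    have hlin : S *ᵥ u = ∑ τ, y τ • (S *ᵥ φ τ) := by
      rw [hu]
      simp [Matrix.mulVec_sum, Matrix.mulVec_smul]
    rw [hlin, map_sum]
    simp [hg]
  have hquad : u ⬝ᵥ (A *ᵥ u) = ‖∑ τ, y τ • g τ‖ ^ 2 := by
    rw [key, ← hSu, hLnorm]
  -- Step 2: triangle inequality + bound on |y|
  have step2 : ‖∑ τ, y τ • g τ‖ ≤ 2 * H * ∑ τ, ‖g τ‖ := by
    calc ‖∑ τ, y τ • g τ‖ ≤ ∑ τ, ‖y τ • g τ‖ := norm_sum_le _ _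
      _ = ∑ τ, |y τ| * ‖g τ‖ := by simp [norm_smul]
      _ ≤ ∑ τ, 2 * H * ‖g τ‖ := by
          refine Finset.sum_le_sum fun τ _ => ?_
          exact mul_le_mul_of_nonneg_right (hy τ) (norm_nonneg _)
      _ = 2 * H * ∑ τ, ‖g τ‖ := by rw [Finset.mul_sum]
  -- Step 3: Cauchy-Schwarz on the sum
  have step3 : (∑ τ, ‖g τ‖) ^ 2 ≤ ((k-1 : ℕ) : ℝ) * ∑ τ, ‖g τ‖ ^ 2 := by
    have := Finset.sum_mul_sq_le_sq_mul_sq Finset.univ (fun _ : Fin (k-1) => (1 : ℝ))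
      (fun τ => ‖g τ‖)
    simpa [Finset.card_univ] using this
  -- Step 4: trace bound  ∑ ‖g τ‖² ≤ d
  have hgsq : ∀ τ, ‖g τ‖ ^ 2 = φ τ ⬝ᵥ (A *ᵥ φ τ) := by
    intro τ
    rw [hg]
    rw [hLnorm, key]
  have htrace : ∑ τ, φ τ ⬝ᵥ (A *ᵥ φ τ) ≤ (d : ℝ) := by
    have hMA : M * A = 1 - A := by
      have hΛ1 : M = Λ - 1 := by rw [hΛ]; abel
      rw [hΛ1, Matrix.sub_mul, Matrix.mul_nonsing_inv _ hdet, Matrix.one_mul]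
    have hterm : ∀ τ, φ τ ⬝ᵥ (A *ᵥ φ τ) = Matrix.trace (vecMulVec (φ τ) (φ τ) * A) := by
      intro τ
      simp only [Matrix.trace, Matrix.diag_apply, Matrix.mul_apply, vecMulVec_apply,
        dotProduct, Matrix.mulVec, Finset.mul_sum]
      rw [Finset.sum_comm]
      apply Finset.sum_congr rfl
      intro i _
      apply Finset.sum_congr rfl
      intro j _
      ring
    have hsum : ∑ τ, φ τ ⬝ᵥ (A *ᵥ φ τ) = Matrix.trace (M * A) := by
      rw [hM, Matrix.sum_mul, Matrix.trace_sum]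
      exact Finset.sum_congr rfl fun τ _ => hterm τ
    have htrA : 0 ≤ Matrix.trace A := by
      rw [Matrix.trace]
      refine Finset.sum_nonneg fun i _ => ?_
      have := hApd.posSemidef.dotProduct_mulVec_nonneg (Pi.single i 1)
      simpa [dotProduct, Matrix.mulVec, Pi.single_apply, Finset.mul_sum] using this
    rw [hsum, hMA, Matrix.trace_sub, Matrix.trace_one]
    simp only [Finset.card_univ, Fintype.card_fin]
    linarith
  have hsumg : ∑ τ, ‖g τ‖ ^ 2 ≤ (d : ℝ) := by
    calc ∑ τ, ‖g τ‖ ^ 2 = ∑ τ, φ τ ⬝ᵥ (A *ᵥ φ τ) :=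
          Finset.sum_congr rfl fun τ _ => hgsq τ
      _ ≤ (d : ℝ) := htrace
  -- Assemble
  have hnk : ((k-1 : ℕ) : ℝ) ≤ (k : ℝ) := by exact_mod_cast Nat.sub_le k 1
  have hfinal : w ⬝ᵥ w ≤ (2 * H) ^ 2 * ((d : ℝ) * k) := by
    have hnorm_nonneg : (0:ℝ) ≤ ∑ τ, ‖g τ‖ := Finset.sum_nonneg fun τ _ => norm_nonneg _
    have h1 : ‖∑ τ, y τ • g τ‖ ^ 2 ≤ (2 * H) ^ 2 * (((k-1 : ℕ) : ℝ) * ∑ τ, ‖g τ‖ ^ 2) := by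
      have := mul_le_mul step2 step2 (norm_nonneg _) (by positivity)
      calc ‖∑ τ, y τ • g τ‖ ^ 2 ≤ (2 * H * ∑ τ, ‖g τ‖) ^ 2 := by
            rw [sq, sq]; exact this
        _ = (2 * H) ^ 2 * (∑ τ, ‖g τ‖) ^ 2 := by ring
        _ ≤ (2 * H) ^ 2 * (((k-1 : ℕ) : ℝ) * ∑ τ, ‖g τ‖ ^ 2) := by
            exact mul_le_mul_of_nonneg_left step3 (by positivity)
    have h2 : ((k-1 : ℕ) : ℝ) * ∑ τ, ‖g τ‖ ^ 2 ≤ (d : ℝ) * k := by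
      have hgs_nonneg : (0:ℝ) ≤ ∑ τ, ‖g τ‖ ^ 2 :=
        Finset.sum_nonneg fun τ _ => sq_nonneg _
      calc ((k-1 : ℕ) : ℝ) * ∑ τ, ‖g τ‖ ^ 2 ≤ (k : ℝ) * ∑ τ, ‖g τ‖ ^ 2 :=
            mul_le_mul_of_nonneg_right hnk hgs_nonneg
        _ ≤ (k : ℝ) * d := mul_le_mul_of_nonneg_left hsumg (Nat.cast_nonneg k)
        _ = (d : ℝ) * k := by ring
    calc w ⬝ᵥ w ≤ u ⬝ᵥ (A *ᵥ u) := step1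
      _ = ‖∑ τ, y τ • g τ‖ ^ 2 := hquad
      _ ≤ (2 * H) ^ 2 * (((k-1 : ℕ) : ℝ) * ∑ τ, ‖g τ‖ ^ 2) := h1
      _ ≤ (2 * H) ^ 2 * ((d : ℝ) * k) := mul_le_mul_of_nonneg_left h2 (by positivity)
  have hww : ∑ i, (w i) ^ 2 = w ⬝ᵥ w := by simp [dotProduct, sq]
  rw [hww]
  calc Real.sqrt (w ⬝ᵥ w) ≤ Real.sqrt ((2 * H) ^ 2 * ((d : ℝ) * k)) :=
        Real.sqrt_le_sqrt hfinal
    _ = 2 * H * Real.sqrt ((d : ℝ) * k) := by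
        rw [Real.sqrt_mul (sq_nonneg _), Real.sqrt_sq (by positivity)]
end

section
/- (Elliptical potential lemma) Let {φ_t}_{t≥1} ⊆ ℝ^d with ‖φ_t‖ ≤ 1 for all t, let Λ₀ ∈ ℝ^{d×d} be positive definite with smallest eigenvalue λ_min(Λ₀) ≥ 1, and let Λ_t = Λ₀ + Σ_{i=1}^t φ_i φ_i^⊤. Then for all t, log(det Λ_t / det Λ₀) ≤ Σ_{j=1}^t φ_j^⊤ Λ_{j-1}^{-1} φ_j ≤ 2 log(det Λ_t / det Λ₀). -/
open Finset Matrix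

/-- Elliptical potential lemma: with `‖φ_t‖ ≤ 1`, `Λ₀` positive definite with
smallest eigenvalue at least 1 (i.e. `Λ₀ - I` is positive semidefinite), and
`Λ_t = Λ₀ + Σ_{i=1}^t φ_i φ_i^⊤`, for every `t`:
`log(det Λ_t / det Λ₀) ≤ Σ_{j=1}^t φ_j^⊤ Λ_{j-1}⁻¹ φ_j ≤ 2 log(det Λ_t / det Λ₀)`. -/
theorem elliptical_potential {d : ℕ} (φ : ℕ → Fin d → ℝ)
    (hφ : ∀ t, Real.sqrt (∑ i, (φ t i) ^ 2) ≤ 1)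
    (Λ₀ : Matrix (Fin d) (Fin d) ℝ) (hΛ₀ : Λ₀.PosDef)
    (hmin : (Λ₀ - 1).PosSemidef)
    (Λ : ℕ → Matrix (Fin d) (Fin d) ℝ)
    (hΛ : ∀ t, Λ t = Λ₀ + ∑ i ∈ Finset.Icc 1 t, vecMulVec (φ i) (φ i)) :
    ∀ t, Real.log ((Λ t).det / Λ₀.det) ≤
        (∑ j ∈ Finset.Icc 1 t, φ j ⬝ᵥ ((Λ (j - 1))⁻¹ *ᵥ φ j)) ∧
      (∑ j ∈ Finset.Icc 1 t, φ j ⬝ᵥ ((Λ (j - 1))⁻¹ *ᵥ φ j)) ≤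
        2 * Real.log ((Λ t).det / Λ₀.det) := by
  have hΛ0 : Λ 0 = Λ₀ := by simp [hΛ]
  have hstep : ∀ t, Λ (t + 1) = Λ t + vecMulVec (φ (t + 1)) (φ (t + 1)) := by
    intro t
    rw [hΛ, hΛ, Finset.sum_Icc_succ_top (by omega : 1 ≤ t + 1), add_assoc]
  -- each rank-one update is PSD
  have hvv : ∀ j, (vecMulVec (φ j) (φ j)).PosSemidef := by
    intro j
    rw [vecMulVec_eq (Fin 1)]
    have := Matrix.posSemidef_self_mul_conjTranspose (Matrix.replicateCol (Fin 1) (φ j))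
    simp at this
    convert this using 1
    rfl
  -- Λ t is positive definite
  have hpd : ∀ t, (Λ t).PosDef := by
    intro t
    induction t with
    | zero => rwa [hΛ0]
    | succ n ih => rw [hstep]; exact ih.add_posSemidef (hvv _)
  -- Λ t - 1 is PSD
  have hge1 : ∀ t, ((Λ t) - 1).PosSemidef := by
    intro t
    induction t with
    | zero => rwa [hΛ0]
    | succ n ih =>
      have h : Λ (n + 1) - 1 = (Λ n - 1) + vecMulVec (φ (n + 1)) (φ (n + 1)) := by
        rw [hstep]; abel
      rw [h]; exact ih.add (hvv _)
  -- the quadratic forms are nonnegative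
  have hx0 : ∀ j, 0 ≤ φ j ⬝ᵥ ((Λ (j - 1))⁻¹ *ᵥ φ j) := by
    intro j
    have := ((hpd (j - 1)).inv).posSemidef.dotProduct_mulVec_nonneg (φ j)
    simpa using this
  -- the quadratic forms are at most 1
  have hx1 : ∀ j, φ j ⬝ᵥ ((Λ (j - 1))⁻¹ *ᵥ φ j) ≤ 1 := by
    intro j
    set A := Λ (j - 1) with hA
    set ψ : Fin d → ℝ := A⁻¹ *ᵥ φ j with hψ
    have hpdA := hpd (j - 1)
    have hAψ : A *ᵥ ψ = φ j := by
      rw [hψ, mulVec_mulVec, Matrix.mul_nonsing_inv _ hpdA.det_pos.ne'.isUnit, one_mulVec]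
    -- ψ ⬝ ψ ≤ ψ ⬝ (A ψ) = ψ ⬝ φ
    have h1 : ψ ⬝ᵥ ψ ≤ ψ ⬝ᵥ φ j := by
      have h := (hge1 (j - 1)).dotProduct_mulVec_nonneg ψ
      simp only [star_trivial, sub_mulVec, dotProduct_sub, one_mulVec, ← hA, hAψ] at h
      linarith
    -- Cauchy–Schwarz
    have hcs : (φ j ⬝ᵥ ψ) ^ 2 ≤ (∑ i, (φ j i) ^ 2) * (ψ ⬝ᵥ ψ) := by
      have := Finset.sum_mul_sq_le_sq_mul_sq Finset.univ (φ j) ψ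
      simpa [dotProduct, pow_two] using this
    have hφ1 : (∑ i, (φ j i) ^ 2) ≤ 1 := by
      have hs : 0 ≤ ∑ i, (φ j i) ^ 2 := Finset.sum_nonneg fun i _ => sq_nonneg _
      nlinarith [Real.sq_sqrt hs, Real.sqrt_nonneg (∑ i, (φ j i) ^ 2), hφ j]
    have hψψ : 0 ≤ ψ ⬝ᵥ ψ := by
      simpa [dotProduct] using Finset.sum_nonneg fun i (_ : i ∈ Finset.univ) =>
        mul_self_nonneg (ψ i)
    have hcomm : φ j ⬝ᵥ ψ = ψ ⬝ᵥ φ j := dotProduct_comm _ _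
    have hx0' : 0 ≤ φ j ⬝ᵥ ψ := hx0 j
    nlinarith [hcs, h1, hφ1, hψψ, hx0', hcomm]
  -- determinant recursion and log identity
  have hdet : ∀ t, Real.log ((Λ t).det / Λ₀.det)
      = ∑ j ∈ Finset.Icc 1 t, Real.log (1 + φ j ⬝ᵥ ((Λ (j - 1))⁻¹ *ᵥ φ j)) := by
    intro t
    induction t with
    | zero => simp [hΛ0, div_self hΛ₀.det_pos.ne']
    | succ n ih =>
      have hrec : (Λ (n + 1)).det
          = (Λ n).det * (1 + φ (n + 1) ⬝ᵥ ((Λ n)⁻¹ *ᵥ φ (n + 1))) := by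
        rw [hstep, vecMulVec_eq (Fin 1),
          Matrix.det_add_replicateCol_mul_replicateRow (hpd n).det_pos.ne'.isUnit]
        congr 1
        rw [Matrix.mul_assoc, ← Matrix.replicateCol_mulVec]
        simp [Matrix.det_fin_one, Matrix.one_apply]
      have hdn : (0:ℝ) < (Λ n).det := (hpd n).det_pos
      have hd0 : (0:ℝ) < Λ₀.det := hΛ₀.det_pos
      have hxpos : (0:ℝ) < 1 + φ (n + 1) ⬝ᵥ ((Λ n)⁻¹ *ᵥ φ (n + 1)) := by
        have := hx0 (n + 1)
        simp only [Nat.add_sub_cancel] at this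
        linarith
      rw [Finset.sum_Icc_succ_top (by omega : 1 ≤ n + 1), ← ih, hrec]
      have : (Λ n).det * (1 + φ (n + 1) ⬝ᵥ ((Λ n)⁻¹ *ᵥ φ (n + 1))) / Λ₀.det
          = ((Λ n).det / Λ₀.det) * (1 + φ (n + 1) ⬝ᵥ ((Λ n)⁻¹ *ᵥ φ (n + 1))) := by
        ring
      rw [this, Real.log_mul (by positivity) hxpos.ne']
      simp [Nat.add_sub_cancel]
  intro t
  rw [hdet t]
  constructor
  · refine Finset.sum_le_sum fun j _ => ?_
    have h := Real.log_le_sub_one_of_pos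
      (x := 1 + φ j ⬝ᵥ ((Λ (j - 1))⁻¹ *ᵥ φ j)) (by linarith [hx0 j])
    linarith
  · rw [Finset.mul_sum]
    refine Finset.sum_le_sum fun j _ => ?_
    set x := φ j ⬝ᵥ ((Λ (j - 1))⁻¹ *ᵥ φ j) with hxdef
    have hx0' : 0 ≤ x := hx0 j
    have hx1' : x ≤ 1 := hx1 j
    have hpos : (0:ℝ) < 1 + x := by linarith
    have hlog : 1 - (1 + x)⁻¹ ≤ Real.log (1 + x) :=
      Real.one_sub_inv_le_log_of_pos hpos
    have hinv : (1 + x)⁻¹ * (1 + x) = 1 := inv_mul_cancel₀ hpos.ne'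
    nlinarith [hlog, hinv, inv_pos.mpr hpos, hx0', hx1']
end
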